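/- Suppose P_G decomposes via the hyperplane a·x = 0. Then there exist fixed reals α, β with α+β > 0 such that every positive edge (i,j) has {a_i,a_j} = {α,β} and every negative edge (k,ℓ) has {a_k,a_ℓ} = {-α,-β}. Moreover one can modify a, without changing the decomposition, so that all coordinates a_i lie in {0,1,-1}. -/

import Mathlib

open scoped BigOperators

/-- `ρ(i,j) = e_i + e_j` -/
noncomputable def rho {d : ℕ} (i j : Fin d) : Fin d → ℝ :=
  fun t => (if t = i then 1 else 0) + (if t = j then 1 else 0)

/-- The edge polytope of a graph `G` on `[d]`. -/
noncomputable def edgePolytope {d : ℕ} (G : SimpleGraph (Fin d)) : Set (Fin d → ℝ) :=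
  convexHull ℝ {x | ∃ i j, G.Adj i j ∧ x = rho i j}

/-- dot product -/
def dotp {d : ℕ} (a x : Fin d → ℝ) : ℝ := ∑ t, a t * x t

/-- a polytope is integral if all its vertices (extreme points) are lattice points -/
def IsIntegralSet {d : ℕ} (P : Set (Fin d → ℝ)) : Prop :=
  ∀ x ∈ Set.extremePoints ℝ P, ∀ t, ∃ z : ℤ, x t = (z : ℝ)

/-- The hyperplane `a·x = b` decomposes `P`: it meets the relative interior of `P`,
both open sides meet `P`, and both closed half-space pieces are integral. -/
def Decomposes {d : ℕ} (P : Set (Fin d → ℝ)) (a : Fin d → ℝ) (b : ℝ) : Prop :=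
  (∃ x ∈ intrinsicInterior ℝ P, dotp a x = b) ∧
  (∃ y ∈ P, dotp a y < b) ∧ (∃ y ∈ P, b < dotp a y) ∧
  IsIntegralSet (P ∩ {x | b ≤ dotp a x}) ∧
  IsIntegralSet (P ∩ {x | dotp a x ≤ b})

/-! ### Auxiliary lemmas -/

section Aux

variable {d : ℕ}

lemma rho_nonneg (i j t : Fin d) : 0 ≤ rho i j t := by
  unfold rho; split_ifs <;> norm_num

lemma rho_le_one {i j : Fin d} (h : i ≠ j) (t : Fin d) : rho i j t ≤ 1 := by
  unfold rho
  rcases eq_or_ne t i with rfl | h1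
  · rw [if_pos rfl, if_neg h]; norm_num
  · rw [if_neg h1]; split_ifs <;> norm_num

lemma rho_apply_left {i j : Fin d} (h : i ≠ j) : rho i j i = 1 := by
  simp [rho, h]

lemma rho_apply_right {i j : Fin d} (h : i ≠ j) : rho i j j = 1 := by
  simp [rho, h.symm]

lemma rho_apply_other {i j t : Fin d} (h1 : t ≠ i) (h2 : t ≠ j) : rho i j t = 0 := by
  simp [rho, h1, h2]

lemma rho_pos_cases {i j t : Fin d} (h : 0 < rho i j t) : t = i ∨ t = j := by
  by_contra hc
  push_neg at hc
  rw [rho_apply_other hc.1 hc.2] at h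
  exact lt_irrefl _ h

lemma rho_sum {i j : Fin d} (h : i ≠ j) : ∑ t, rho i j t = 2 := by
  unfold rho
  rw [Finset.sum_add_distrib]
  simp only [Finset.sum_ite_eq', Finset.mem_univ, if_pos]
  norm_num

lemma dotp_rho (a : Fin d → ℝ) (i j : Fin d) : dotp a (rho i j) = a i + a j := by
  unfold dotp rho
  simp only [mul_add, Finset.sum_add_distrib, mul_ite, mul_one, mul_zero]
  simp

/-- `dotp a` as a linear map. -/
noncomputable def dotL (a : Fin d → ℝ) : (Fin d → ℝ) →ₗ[ℝ] ℝ where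
  toFun := dotp a
  map_add' x y := by simp [dotp, mul_add, Finset.sum_add_distrib]
  map_smul' c x := by simp [dotp, Finset.mul_sum, mul_left_comm]

lemma dotp_combo (a x y : Fin d → ℝ) (s t : ℝ) :
    dotp a (s • x + t • y) = s * dotp a x + t * dotp a y := by
  unfold dotp
  simp only [Pi.add_apply, Pi.smul_apply, smul_eq_mul, Finset.mul_sum]
  rw [← Finset.sum_add_distrib]
  apply Finset.sum_congr rfl
  intro u _
  ring

lemma dotp_sum_smul (a : Fin d → ℝ) {ι : Type} (t : Finset ι) (w : ι → ℝ)
    (z : ι → (Fin d → ℝ)) :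
    dotp a (∑ m ∈ t, w m • z m) = ∑ m ∈ t, w m * dotp a (z m) := by
  have := map_sum (dotL a) (fun m => w m • z m) t
  simp only [map_smul, smul_eq_mul] at this
  exact this

lemma isLinearMap_dotp (a : Fin d → ℝ) : IsLinearMap ℝ (dotp a) :=
  ⟨(dotL a).map_add, (dotL a).map_smul⟩

lemma continuous_dotp (a : Fin d → ℝ) : Continuous (dotp a) := by
  unfold dotp
  exact continuous_finset_sum _ fun t _ => (continuous_const.mul (continuous_apply t))

variable {G : SimpleGraph (Fin d)}

lemma genSet_finite :
    ({x | ∃ i j, G.Adj i j ∧ x = rho i j} : Set (Fin d → ℝ)).Finite := by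
  apply Set.Finite.subset (Set.finite_range (fun p : Fin d × Fin d => rho p.1 p.2))
  rintro x ⟨i, j, _, rfl⟩
  exact ⟨(i, j), rfl⟩

lemma subgen_finite (Q : Fin d → Fin d → Prop) :
    ({x | ∃ i j, G.Adj i j ∧ Q i j ∧ x = rho i j} : Set (Fin d → ℝ)).Finite := by
  apply Set.Finite.subset (Set.finite_range (fun p : Fin d × Fin d => rho p.1 p.2))
  rintro x ⟨i, j, _, _, rfl⟩
  exact ⟨(i, j), rfl⟩

lemma edgePolytope_compact : IsCompact (edgePolytope G) :=
  genSet_finite.isCompact_convexHull (𝕜 := ℝ)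

lemma edgePolytope_convex : Convex ℝ (edgePolytope G) :=
  convex_convexHull ℝ _

lemma rho_mem_edgePolytope {i j : Fin d} (h : G.Adj i j) : rho i j ∈ edgePolytope G :=
  subset_convexHull ℝ _ ⟨i, j, h, rfl⟩

/-- A lattice point of the edge polytope is `ρ(i,j)` for some edge. -/
lemma lattice_mem_edgePolytope {x : Fin d → ℝ} (hx : x ∈ edgePolytope G)
    (hint : ∀ t, ∃ z : ℤ, x t = (z : ℝ)) : ∃ i j, G.Adj i j ∧ x = rho i j := by
  rw [edgePolytope, convexHull_eq] at hx
  obtain ⟨ι, t, w, z, hw0, hw1, hz, hcm⟩ := hx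
  rw [Finset.centerMass_eq_of_sum_1 _ _ hw1] at hcm
  have hxapp : ∀ s, x s = ∑ m ∈ t, w m * z m s := by
    intro s
    rw [← hcm]
    simp [Finset.sum_apply]
  have hz_nonneg : ∀ m ∈ t, ∀ s, 0 ≤ z m s := by
    intro m hm s
    obtain ⟨i, j, _, hzm⟩ := hz m hm
    rw [hzm]; exact rho_nonneg i j s
  have hz_le_one : ∀ m ∈ t, ∀ s, z m s ≤ 1 := by
    intro m hm s
    obtain ⟨i, j, hij, hzm⟩ := hz m hm
    rw [hzm]; exact rho_le_one hij.ne s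
  have hx_nonneg : ∀ s, 0 ≤ x s := by
    intro s
    rw [hxapp s]
    exact Finset.sum_nonneg fun m hm => mul_nonneg (hw0 m hm) (hz_nonneg m hm s)
  have hx_le_one : ∀ s, x s ≤ 1 := by
    intro s
    rw [hxapp s]
    calc ∑ m ∈ t, w m * z m s ≤ ∑ m ∈ t, w m * 1 :=
          Finset.sum_le_sum fun m hm =>
            mul_le_mul_of_nonneg_left (hz_le_one m hm s) (hw0 m hm)
      _ = 1 := by simp [hw1]
  have hx_sum : ∑ s, x s = 2 := by
    have : ∑ s, x s = ∑ m ∈ t, w m * (∑ s, z m s) := by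
      simp only [hxapp]
      rw [Finset.sum_comm]
      congr 1; ext m
      rw [Finset.mul_sum]
    rw [this]
    have : ∀ m ∈ t, w m * (∑ s, z m s) = w m * 2 := by
      intro m hm
      obtain ⟨i, j, hij, hzm⟩ := hz m hm
      rw [hzm, rho_sum hij.ne]
    rw [Finset.sum_congr rfl this, ← Finset.sum_mul, hw1, one_mul]
  -- each coordinate is 0 or 1
  have hx01 : ∀ s, x s = 0 ∨ x s = 1 := by
    intro s
    obtain ⟨n, hn⟩ := hint s
    have h0 := hx_nonneg s
    have h1 := hx_le_one s
    rw [hn] at h0 h1 ⊢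
    have hn0 : (0:ℤ) ≤ n := by exact_mod_cast h0
    have hn1 : n ≤ 1 := by exact_mod_cast h1
    interval_cases n <;> simp
  -- find the two coordinates equal to 1
  have hex : ∃ i, x i = 1 := by
    by_contra hc
    push_neg at hc
    have : ∀ s, x s = 0 := fun s => (hx01 s).resolve_right (hc s)
    rw [Finset.sum_congr rfl (fun s _ => this s)] at hx_sum
    norm_num at hx_sum
  obtain ⟨i, hi⟩ := hex
  have hsum_rest : ∑ s ∈ Finset.univ.erase i, x s = 1 := by
    have := Finset.add_sum_erase Finset.univ x (Finset.mem_univ i)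
    rw [hx_sum] at this
    linarith [this, hi]
  have hexj : ∃ j, j ≠ i ∧ x j = 1 := by
    by_contra hc
    push_neg at hc
    have : ∀ s ∈ Finset.univ.erase i, x s = 0 := by
      intro s hs
      exact (hx01 s).resolve_right (hc s (Finset.mem_erase.1 hs).1)
    rw [Finset.sum_congr rfl this] at hsum_rest
    norm_num at hsum_rest
  obtain ⟨j, hji, hj⟩ := hexj
  have hother : ∀ s, s ≠ i → s ≠ j → x s = 0 := by
    intro s hsi hsj
    by_contra hc
    have hs1 : x s = 1 := (hx01 s).resolve_left hc
    have hle : x i + x j + x s ≤ ∑ u, x u := by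
      have h1 : ({i, j, s} : Finset (Fin d)) ⊆ Finset.univ := Finset.subset_univ _
      have h2 : ∑ u ∈ ({i, j, s} : Finset (Fin d)), x u = x i + x j + x s := by
        rw [Finset.sum_insert (by simp [hji.symm, hsi.symm]),
          Finset.sum_insert (by simp [hsj.symm]), Finset.sum_singleton]
        ring
      rw [← h2]
      exact Finset.sum_le_sum_of_subset_of_nonneg h1 fun u _ _ => hx_nonneg u
    rw [hx_sum, hi, hj, hs1] at hle
    norm_num at hle
  have hxr : x = rho j i := by
    funext s
    rcases eq_or_ne s j with rfl | hsj
    · rw [hj, rho_apply_left hji]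
    rcases eq_or_ne s i with rfl | hsi
    · rw [hi, rho_apply_right hji]
    · rw [hother s hsi hsj, rho_apply_other hsj hsi]
  -- find an edge with positive weight; it must be {i,j}
  have hexm : ∃ m ∈ t, 0 < w m := by
    by_contra hc
    push_neg at hc
    have : ∀ m ∈ t, w m = 0 := fun m hm => le_antisymm (hc m hm) (hw0 m hm)
    rw [Finset.sum_congr rfl this] at hw1
    norm_num at hw1
  obtain ⟨m, hm, hwm⟩ := hexm
  obtain ⟨i', j', hij', hzm⟩ := hz m hm
  have hkey : ∀ v : Fin d, 0 < z m v → (v = i ∨ v = j) := by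
    intro v hv
    have hle : w m * z m v ≤ x v := by
      rw [hxapp v]
      exact Finset.single_le_sum
        (fun n hn => mul_nonneg (hw0 n hn) (hz_nonneg n hn v)) hm
    have hpos : 0 < x v := lt_of_lt_of_le (mul_pos hwm hv) hle
    by_contra hc
    push_neg at hc
    rw [hother v hc.1 hc.2] at hpos
    exact lt_irrefl _ hpos
  have hi' : i' = i ∨ i' = j := by
    apply hkey
    rw [hzm, rho_apply_left hij'.ne]; norm_num
  have hj' : j' = i ∨ j' = j := by
    apply hkey
    rw [hzm, rho_apply_right hij'.ne]; norm_num
  have hne : i' ≠ j' := hij'.ne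
  have hsplit : (i' = i ∧ j' = j) ∨ (i' = j ∧ j' = i) := by
    rcases hi' with h | h <;> rcases hj' with h' | h'
    · exact absurd (h.trans h'.symm) hne
    · exact Or.inl ⟨h, h'⟩
    · exact Or.inr ⟨h, h'⟩
    · exact absurd (h.trans h'.symm) hne
  rcases hsplit with ⟨h1, h2⟩ | ⟨h1, h2⟩
  · rw [h1, h2] at hij'
    exact ⟨j, i, hij'.symm, hxr⟩
  · rw [h1, h2] at hij'
    exact ⟨j, i, hij', hxr⟩

end Aux

section Half

variable {d : ℕ} {G : SimpleGraph (Fin d)} {a : Fin d → ℝ}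

/-- The nonnegative closed piece is the convex hull of the `ρ`'s of nonnegative edges. -/
lemma halfspace_eq
    (hInt : IsIntegralSet (edgePolytope G ∩ {x | 0 ≤ dotp a x})) :
    edgePolytope G ∩ {x | 0 ≤ dotp a x}
      = convexHull ℝ {x | ∃ i j, G.Adj i j ∧ 0 ≤ a i + a j ∧ x = rho i j} := by
  set Q := edgePolytope G ∩ {x | 0 ≤ dotp a x} with hQ
  have hQconv : Convex ℝ Q :=
    edgePolytope_convex.inter (convex_halfSpace_ge (isLinearMap_dotp a) 0)
  have hQcomp : IsCompact Q :=
    edgePolytope_compact.inter_right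
      (IsClosed.preimage (continuous_dotp a) isClosed_Ici)
  have hKM := closure_convexHull_extremePoints hQcomp hQconv
  have hext : Set.extremePoints ℝ Q ⊆
      {x | ∃ i j, G.Adj i j ∧ 0 ≤ a i + a j ∧ x = rho i j} := by
    intro x hx
    have hxQ : x ∈ Q := extremePoints_subset hx
    obtain ⟨i, j, hij, hxr⟩ := lattice_mem_edgePolytope hxQ.1 (hInt x hx)
    refine ⟨i, j, hij, ?_, hxr⟩
    have := hxQ.2
    rw [Set.mem_setOf_eq, hxr, dotp_rho] at this
    exact this
  apply Set.Subset.antisymm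
  · intro x hx
    rw [← hKM] at hx
    have hclosed : IsClosed (convexHull ℝ
        {x : Fin d → ℝ | ∃ i j, G.Adj i j ∧ 0 ≤ a i + a j ∧ x = rho i j}) :=
      ((subgen_finite (fun i j => 0 ≤ a i + a j)).isCompact_convexHull (𝕜 := ℝ)).isClosed
    have : closure (convexHull ℝ (Set.extremePoints ℝ Q)) ⊆
        convexHull ℝ {x : Fin d → ℝ | ∃ i j, G.Adj i j ∧ 0 ≤ a i + a j ∧ x = rho i j} := by
      rw [← hclosed.closure_eq]
      exact closure_mono (convexHull_mono hext)
    exact this hx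
  · apply convexHull_min
    · rintro x ⟨i, j, hij, hpos, rfl⟩
      exact ⟨rho_mem_edgePolytope hij, by rw [Set.mem_setOf_eq, dotp_rho]; exact hpos⟩
    · exact hQconv

/-- A point of the polytope on the hyperplane is in the hull of zero edges. -/
lemma mem_zero_hull
    (hInt : IsIntegralSet (edgePolytope G ∩ {x | 0 ≤ dotp a x}))
    {p : Fin d → ℝ} (hp : p ∈ edgePolytope G) (h0 : dotp a p = 0) :
    p ∈ convexHull ℝ {x | ∃ i j, G.Adj i j ∧ a i + a j = 0 ∧ x = rho i j} := by
  have hpQ : p ∈ edgePolytope G ∩ {x | 0 ≤ dotp a x} := ⟨hp, by simp [h0]⟩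
  rw [halfspace_eq hInt, convexHull_eq] at hpQ
  obtain ⟨ι, t, w, z, hw0, hw1, hz, hcm⟩ := hpQ
  rw [Finset.centerMass_eq_of_sum_1 _ _ hw1] at hcm
  have hdot : ∑ m ∈ t, w m * dotp a (z m) = 0 := by
    rw [← dotp_sum_smul, hcm, h0]
  have hterm0 : ∀ m ∈ t, w m * dotp a (z m) = 0 := by
    have hnn : ∀ m ∈ t, 0 ≤ w m * dotp a (z m) := by
      intro m hm
      obtain ⟨i, j, hij, hpos, hzm⟩ := hz m hm
      rw [hzm, dotp_rho]
      exact mul_nonneg (hw0 m hm) hpos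
    exact (Finset.sum_eq_zero_iff_of_nonneg hnn).1 hdot
  have hzz : ∀ m ∈ t, w m ≠ 0 → ∃ i j, G.Adj i j ∧ a i + a j = 0 ∧ z m = rho i j := by
    intro m hm hwm
    obtain ⟨i, j, hij, _, hzm⟩ := hz m hm
    refine ⟨i, j, hij, ?_, hzm⟩
    have := hterm0 m hm
    rw [hzm, dotp_rho] at this
    exact (mul_eq_zero.1 this).resolve_left hwm
  rw [convexHull_eq]
  refine ⟨ι, t.filter (fun m => w m ≠ 0), w, z, fun m hm => hw0 m (Finset.mem_filter.1 hm).1,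
    ?_, ?_, ?_⟩
  · rw [Finset.sum_filter_ne_zero, hw1]
  · intro m hm
    obtain ⟨hmt, hwm⟩ := Finset.mem_filter.1 hm
    exact hzz m hmt hwm
  · have hsumw : ∑ m ∈ t.filter (fun m => w m ≠ 0), w m = 1 := by
      rw [Finset.sum_filter_ne_zero, hw1]
    rw [Finset.centerMass_eq_of_sum_1 _ _ hsumw]
    rw [← hcm]
    apply Finset.sum_filter_of_ne
    intro m _ hne hwm
    rw [hwm, zero_smul] at hne
    exact hne rfl

/-- Main pairing lemma: a positive and a negative edge have opposite signatures. -/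
lemma pairing
    (hInt : IsIntegralSet (edgePolytope G ∩ {x | 0 ≤ dotp a x}))
    {i j k l : Fin d} (hij : G.Adj i j) (hpos : 0 < a i + a j)
    (hkl : G.Adj k l) (hneg : a k + a l < 0) :
    (a k = -a i ∧ a l = -a j) ∨ (a k = -a j ∧ a l = -a i) := by
  have hden : 0 < (a i + a j) - (a k + a l) := by linarith
  set S : ℝ := (-(a k + a l)) / ((a i + a j) - (a k + a l)) with hSdef
  have hS0 : 0 < S := div_pos (by linarith) hden
  have hS1 : S < 1 := (div_lt_one hden).2 (by linarith)
  have hSmul : S * ((a i + a j) - (a k + a l)) = -(a k + a l) :=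
    div_mul_cancel₀ _ (ne_of_gt hden)
  set p : Fin d → ℝ := S • rho i j + (1 - S) • rho k l with hpdef
  have hpP : p ∈ edgePolytope G :=
    edgePolytope_convex (rho_mem_edgePolytope hij) (rho_mem_edgePolytope hkl)
      hS0.le (by linarith) (by ring)
  have hp0 : dotp a p = 0 := by
    have hlin : dotp a p = S * dotp a (rho i j) + (1 - S) * dotp a (rho k l) := by
      rw [hpdef, dotp_combo]
    rw [hlin, dotp_rho, dotp_rho]
    nlinarith [hSmul]
  have hmem := mem_zero_hull hInt hpP hp0
  rw [convexHull_eq] at hmem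
  obtain ⟨ι, t, w, z, hw0, hw1, hz, hcm⟩ := hmem
  rw [Finset.centerMass_eq_of_sum_1 _ _ hw1] at hcm
  have hpapp : ∀ s, p s = ∑ m ∈ t, w m * z m s := by
    intro s
    rw [← hcm]
    simp [Finset.sum_apply]
  have hz_nonneg : ∀ m ∈ t, ∀ s, 0 ≤ z m s := by
    intro m hm s
    obtain ⟨i', j', _, _, hzm⟩ := hz m hm
    rw [hzm]; exact rho_nonneg _ _ _
  have hp_vanish : ∀ s, s ≠ i → s ≠ j → s ≠ k → s ≠ l → p s = 0 := by
    intro s h1 h2 h3 h4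
    rw [hpdef]
    simp only [Pi.add_apply, Pi.smul_apply, smul_eq_mul]
    rw [rho_apply_other h1 h2, rho_apply_other h3 h4]
    ring
  -- the claim: each of the four vertices has a zero-edge partner among the four
  have claim : ∀ v : Fin d, 0 < p v →
      ∃ u, a v + a u = 0 ∧ (u = i ∨ u = j ∨ u = k ∨ u = l) ∧ u ≠ v := by
    intro v hv
    rw [hpapp v] at hv
    have hexm : ∃ m ∈ t, 0 < w m * z m v := by
      by_contra hc
      push_neg at hc
      have : ∑ m ∈ t, w m * z m v ≤ 0 := Finset.sum_nonpos hc
      linarith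
    obtain ⟨m, hm, hprod⟩ := hexm
    have hwm : 0 < w m := by
      rcases lt_or_eq_of_le (hw0 m hm) with h | h
      · exact h
      · rw [← h, zero_mul] at hprod; exact absurd hprod (lt_irrefl _)
    have hzv : 0 < z m v := by
      by_contra hc
      push_neg at hc
      nlinarith
    obtain ⟨i', j', hij', hzero', hzm⟩ := hz m hm
    rw [hzm] at hzv
    have hcases := rho_pos_cases hzv
    -- the partner u is the other endpoint
    have hu : ∃ u, a v + a u = 0 ∧ u ≠ v ∧ 0 < z m u := by
      rcases hcases with rfl | rfl
      · exact ⟨j', by linarith [hzero'], hij'.ne.symm,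
          by rw [hzm, rho_apply_right hij'.ne]; norm_num⟩
      · exact ⟨i', by linarith [hzero'], hij'.ne,
          by rw [hzm, rho_apply_left hij'.ne]; norm_num⟩
    obtain ⟨u, hau, huv, hzu⟩ := hu
    refine ⟨u, hau, ?_, huv⟩
    by_contra hc
    push_neg at hc
    obtain ⟨h1, h2, h3, h4⟩ := hc
    have hp_u : p u = 0 := hp_vanish u h1 h2 h3 h4
    have hle : w m * z m u ≤ p u := by
      rw [hpapp u]
      exact Finset.single_le_sum
        (fun n hn => mul_nonneg (hw0 n hn) (hz_nonneg n hn u)) hm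
    nlinarith
  -- coordinates of p at the four vertices are positive
  have hpi : 0 < p i := by
    rw [hpdef]
    simp only [Pi.add_apply, Pi.smul_apply, smul_eq_mul]
    rw [rho_apply_left hij.ne]
    nlinarith [rho_nonneg k l i]
  have hpj : 0 < p j := by
    rw [hpdef]
    simp only [Pi.add_apply, Pi.smul_apply, smul_eq_mul]
    rw [rho_apply_right hij.ne]
    nlinarith [rho_nonneg k l j]
  have hpk : 0 < p k := by
    rw [hpdef]
    simp only [Pi.add_apply, Pi.smul_apply, smul_eq_mul]
    rw [rho_apply_left hkl.ne]
    nlinarith [rho_nonneg i j k]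
  have hpl : 0 < p l := by
    rw [hpdef]
    simp only [Pi.add_apply, Pi.smul_apply, smul_eq_mul]
    rw [rho_apply_right hkl.ne]
    nlinarith [rho_nonneg i j l]
  -- extract the four disjunctions
  have F1 : a i + a k = 0 ∨ a i + a l = 0 := by
    obtain ⟨u, hau, hcases, hne⟩ := claim i hpi
    rcases hcases with rfl | rfl | rfl | rfl
    · exact absurd rfl hne
    · exact absurd hau (by linarith)
    · exact Or.inl hau
    · exact Or.inr hau
  have F2 : a j + a k = 0 ∨ a j + a l = 0 := by
    obtain ⟨u, hau, hcases, hne⟩ := claim j hpj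
    rcases hcases with rfl | rfl | rfl | rfl
    · exact absurd hau (by linarith)
    · exact absurd rfl hne
    · exact Or.inl hau
    · exact Or.inr hau
  have F3 : a k + a i = 0 ∨ a k + a j = 0 := by
    obtain ⟨u, hau, hcases, hne⟩ := claim k hpk
    rcases hcases with rfl | rfl | rfl | rfl
    · exact Or.inl hau
    · exact Or.inr hau
    · exact absurd rfl hne
    · exact absurd hau (by linarith)
  have F4 : a l + a i = 0 ∨ a l + a j = 0 := by
    obtain ⟨u, hau, hcases, hne⟩ := claim l hpl
    rcases hcases with rfl | rfl | rfl | rfl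
    · exact Or.inl hau
    · exact Or.inr hau
    · exact absurd hau (by linarith)
    · exact absurd rfl hne
  rcases F1 with h1 | h1 <;> rcases F2 with h2 | h2 <;>
    rcases F3 with h3 | h3 <;> rcases F4 with h4 | h4 <;>
    first
      | (left; exact ⟨by linarith, by linarith⟩)
      | (right; exact ⟨by linarith, by linarith⟩)

/-- Scaling lemma: if two normals agree up to a factor on all generators,
they agree up to that factor on the whole polytope. -/
lemma dotp_scale {a' : Fin d → ℝ} (r : ℝ)
    (h : ∀ i j, G.Adj i j → dotp a' (rho i j) = r * dotp a (rho i j)) :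
    ∀ x ∈ edgePolytope G, dotp a' x = r * dotp a x := by
  intro x hx
  rw [edgePolytope, convexHull_eq] at hx
  obtain ⟨ι, t, w, z, hw0, hw1, hz, hcm⟩ := hx
  rw [Finset.centerMass_eq_of_sum_1 _ _ hw1] at hcm
  rw [← hcm, dotp_sum_smul, dotp_sum_smul, Finset.mul_sum]
  apply Finset.sum_congr rfl
  intro m hm
  obtain ⟨i, j, hij, hzm⟩ := hz m hm
  rw [hzm, h i j hij]
  ring

end Half

/-- in a decomposition via a hyperplane through the origin, all positive
edges share a common signature (α, β) with α + β > 0, all negative edges have signature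
(-α, -β), and the normal vector may be renormalized to take values in {0, 1, -1}
without changing the decomposition. -/
theorem stmt7 {d : ℕ} (G : SimpleGraph (Fin d)) (hG : G.Connected) (a : Fin d → ℝ)
    (hdec : Decomposes (edgePolytope G) a 0) :
    (∃ α β : ℝ, 0 < α + β ∧
      (∀ i j, G.Adj i j → 0 < a i + a j →
        ((a i = α ∧ a j = β) ∨ (a i = β ∧ a j = α))) ∧
      (∀ k l, G.Adj k l → a k + a l < 0 →
        ((a k = -α ∧ a l = -β) ∨ (a k = -β ∧ a l = -α)))) ∧
    ∃ a' : Fin d → ℝ, (∀ t, a' t = 0 ∨ a' t = 1 ∨ a' t = -1) ∧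
      Decomposes (edgePolytope G) a' 0 ∧
      edgePolytope G ∩ {x | 0 ≤ dotp a' x} = edgePolytope G ∩ {x | 0 ≤ dotp a x} ∧
      edgePolytope G ∩ {x | dotp a' x ≤ 0} = edgePolytope G ∩ {x | dotp a x ≤ 0} := by
  obtain ⟨⟨x₀, hx₀I, hx₀⟩, ⟨yn, hynP, hyn⟩, ⟨yp, hypP, hyp⟩, hIntP, hIntM⟩ := hdec
  -- there exists a negative edge
  have hnegedge : ∃ k l, G.Adj k l ∧ a k + a l < 0 := by
    by_contra hc
    push_neg at hc
    have hsub : edgePolytope G ⊆ {x | 0 ≤ dotp a x} := by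
      apply convexHull_min
      · rintro x ⟨i, j, hij, rfl⟩
        rw [Set.mem_setOf_eq, dotp_rho]
        exact hc i j hij
      · exact convex_halfSpace_ge (isLinearMap_dotp a) 0
    exact absurd (hsub hynP) (by simp; linarith)
  have hposedge : ∃ i j, G.Adj i j ∧ 0 < a i + a j := by
    by_contra hc
    push_neg at hc
    have hsub : edgePolytope G ⊆ {x | dotp a x ≤ 0} := by
      apply convexHull_min
      · rintro x ⟨i, j, hij, rfl⟩
        rw [Set.mem_setOf_eq, dotp_rho]
        exact hc i j hij
      · exact convex_halfSpace_le (isLinearMap_dotp a) 0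
    exact absurd (hsub hypP) (by simp; linarith)
  obtain ⟨i0, j0, hij0, hpos0⟩ := hposedge
  obtain ⟨k0, l0, hkl0, hneg0⟩ := hnegedge
  set α := a i0 with hα
  set β := a j0 with hβ
  have hP0 := pairing hIntP hij0 hpos0 hkl0 hneg0
  have part1 : 0 < α + β ∧
      (∀ i j, G.Adj i j → 0 < a i + a j →
        ((a i = α ∧ a j = β) ∨ (a i = β ∧ a j = α))) ∧
      (∀ k l, G.Adj k l → a k + a l < 0 →
        ((a k = -α ∧ a l = -β) ∨ (a k = -β ∧ a l = -α))) := by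
    refine ⟨hpos0, ?_, ?_⟩
    · intro i j hij hpos
      have Hx := pairing hIntP hij hpos hkl0 hneg0
      rcases Hx with ⟨e1, e2⟩ | ⟨e1, e2⟩ <;> rcases hP0 with ⟨f1, f2⟩ | ⟨f1, f2⟩ <;>
        first
          | (left; exact ⟨by linarith, by linarith⟩)
          | (right; exact ⟨by linarith, by linarith⟩)
    · intro k l hkl hneg
      exact pairing hIntP hij0 hpos0 hkl hneg
  obtain ⟨hab, hposcl, hnegcl⟩ := part1
  refine ⟨⟨α, β, hab, hposcl, hnegcl⟩, ?_⟩
  -- renormalization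
  set γ : ℝ := if α = 0 then β else α with hγdef
  have hγ : γ ≠ 0 := by
    rw [hγdef]
    split_ifs with h
    · intro hb; rw [h, hb] at hab; norm_num at hab
    · exact h
  set φ : ℝ → ℝ := fun x => if x = γ then 1 else if x = -γ then -1 else 0 with hφdef
  have hφneg : ∀ x : ℝ, φ (-x) = -φ x := by
    intro x
    simp only [hφdef]
    split_ifs with h1 h2 h3 h4 h5 h6 <;>
      first
        | (exact absurd (by linarith : γ = 0) hγ)
        | (exact absurd (by linarith : x = -γ) (by assumption))
        | (exact absurd (by linarith : x = γ) (by assumption))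
        | (exact absurd (by linarith : -x = -γ) (by assumption))
        | (exact absurd (by linarith : -x = γ) (by assumption))
        | norm_num
        | ring
  set c : ℝ := φ α + φ β with hcdef
  have hφγ : φ γ = 1 := by simp [hφdef]
  have hc : 0 < c := by
    rw [hcdef]
    rcases eq_or_ne α 0 with h | h
    · have hγβ : γ = β := by rw [hγdef, if_pos h]
      have hφα : φ α = 0 := by
        simp only [hφdef, h]
        rw [if_neg (by exact fun hh => hγ hh.symm), if_neg (by intro hh; apply hγ; linarith)]
      have hφβ : φ β = 1 := by rw [← hγβ]; exact hφγ
      rw [hφα, hφβ]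
      norm_num
    · have hγα : γ = α := by rw [hγdef, if_neg h]
      have hφα : φ α = 1 := by rw [← hγα]; exact hφγ
      have hφβ : 0 ≤ φ β := by
        simp only [hφdef]
        split_ifs with h1 h2
        · norm_num
        · exfalso; rw [hγα] at h2; rw [h2] at hab; norm_num at hab
        · norm_num
      rw [hφα]; linarith
  set r : ℝ := c / (α + β) with hrdef
  have hr : 0 < r := div_pos hc hab
  have hrc : r * (α + β) = c := div_mul_cancel₀ _ (ne_of_gt hab)
  set a' : Fin d → ℝ := fun t => φ (a t) with ha'def
  have hvals : ∀ t, a' t = 0 ∨ a' t = 1 ∨ a' t = -1 := by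
    intro t
    simp only [ha'def, hφdef]
    split_ifs <;> simp
  have hedge : ∀ i j, G.Adj i j → dotp a' (rho i j) = r * dotp a (rho i j) := by
    intro i j hij
    rw [dotp_rho, dotp_rho]
    rcases lt_trichotomy (a i + a j) 0 with h | h | h
    · rcases hnegcl i j hij h with ⟨h1, h2⟩ | ⟨h1, h2⟩ <;>
        · simp only [ha'def]
          rw [h1, h2, hφneg, hφneg]
          linear_combination hrc + hcdef
    · simp only [ha'def]
      have hji : a j = -(a i) := by linarith
      rw [hji, hφneg]
      ring
    · rcases hposcl i j hij h with ⟨h1, h2⟩ | ⟨h1, h2⟩ <;>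
        · simp only [ha'def]
          rw [h1, h2]
          linear_combination -hrc - hcdef
  have hscale : ∀ x ∈ edgePolytope G, dotp a' x = r * dotp a x := dotp_scale r hedge
  have hsetP : edgePolytope G ∩ {x | 0 ≤ dotp a' x} = edgePolytope G ∩ {x | 0 ≤ dotp a x} := by
    ext x
    constructor
    · rintro ⟨hx, hx2⟩
      refine ⟨hx, ?_⟩
      rw [Set.mem_setOf_eq] at hx2 ⊢
      rw [hscale x hx] at hx2
      nlinarith
    · rintro ⟨hx, hx2⟩
      refine ⟨hx, ?_⟩
      rw [Set.mem_setOf_eq] at hx2 ⊢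
      rw [hscale x hx]
      positivity
  have hsetM : edgePolytope G ∩ {x | dotp a' x ≤ 0} = edgePolytope G ∩ {x | dotp a x ≤ 0} := by
    ext x
    constructor
    · rintro ⟨hx, hx2⟩
      refine ⟨hx, ?_⟩
      rw [Set.mem_setOf_eq] at hx2 ⊢
      rw [hscale x hx] at hx2
      nlinarith
    · rintro ⟨hx, hx2⟩
      refine ⟨hx, ?_⟩
      rw [Set.mem_setOf_eq] at hx2 ⊢
      rw [hscale x hx]
      exact mul_nonpos_of_nonneg_of_nonpos hr.le hx2
  refine ⟨a', hvals, ⟨⟨x₀, hx₀I, ?_⟩, ⟨yn, hynP, ?_⟩, ⟨yp, hypP, ?_⟩, ?_, ?_⟩, hsetP, hsetM⟩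
  · have hx₀P : x₀ ∈ edgePolytope G := intrinsicInterior_subset hx₀I
    rw [hscale x₀ hx₀P, hx₀, mul_zero]
  · rw [hscale yn hynP]
    exact mul_neg_of_pos_of_neg hr hyn
  · rw [hscale yp hypP]
    exact mul_pos hr hyp
  · exact hsetP ▸ hIntP
  · exact hsetM ▸ hIntM
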